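/- Let Ω ⊂ ℍ be bounded and h-convex, and let f ∈ C(Ω̄) satisfy f = K on ∂Ω and f ≤ K in Ω̄ for some K ∈ ℝ. Then there exists a function f̲ ∈ C(Ω̄), h-quasiconvex in Ω, such that f̲ ≤ f in Ω̄ and f̲ = K on ∂Ω. -/

import Mathlib

noncomputable section

/-- The underlying space of the first Heisenberg group: `ℝ³`. -/
abbrev Heis := ℝ × ℝ × ℝ

/-- Heisenberg group multiplication. -/
def hmul (p q : Heis) : Heis :=
  (p.1 + q.1, p.2.1 + q.2.1, p.2.2 + q.2.2 + (p.1 * q.2.1 - q.1 * p.2.1) / 2)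

/-- Heisenberg group inverse. -/
def hinv (p : Heis) : Heis := (-p.1, -p.2.1, -p.2.2)

/-- The horizontal plane `ℍ_p = p · ℍ₀` through `p`. -/
def hplane (p : Heis) : Set Heis := {q | ∃ h : Heis, h.2.2 = 0 ∧ q = hmul p h}

/-- The (Euclidean) segment `[p,q]`. -/
def hseg (p q : Heis) : Set Heis :=
  {w | ∃ l : ℝ, 0 ≤ l ∧ l ≤ 1 ∧ w = (1 - l) • p + l • q}

/-- The half-open segment `(p,q]`. -/
def hsegHalfOpen (p q : Heis) : Set Heis :=
  {w | ∃ l : ℝ, 0 < l ∧ l ≤ 1 ∧ w = (1 - l) • p + l • q}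

/-- A set `E ⊆ ℍ` is h-convex if for every `p ∈ E` and `q ∈ ℍ_p ∩ E`,
the horizontal segment `[p,q]` lies in `E`. -/
def IsHConvex (E : Set Heis) : Prop :=
  ∀ p ∈ E, ∀ q ∈ hplane p, q ∈ E → ∀ w ∈ hseg p q, w ∈ E

/-- A set `E` is h-convex up to boundary if for every `p ∈ ∂E` and `q ∈ ℍ_p ∩ E`,
the half-open segment `(p,q]` lies in `E`. -/
def IsHConvexUpToBoundary (E : Set Heis) : Prop :=
  ∀ p ∈ frontier E, ∀ q ∈ hplane p, q ∈ E → ∀ w ∈ hsegHalfOpen p q, w ∈ E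

/-- A function `u` is h-quasiconvex on `Ω` if `u(w) ≤ max (u p) (u q)` for all
`p ∈ Ω`, `q ∈ ℍ_p ∩ Ω` and `w ∈ [p,q]`. -/
def IsHQuasiconvexOn (Ω : Set Heis) (u : Heis → ℝ) : Prop :=
  ∀ p ∈ Ω, ∀ q ∈ hplane p, q ∈ Ω → ∀ w ∈ hseg p q, u w ≤ max (u p) (u q)

/-- `Qf` is the h-quasiconvex envelope of `f` on `Ω`: the greatest h-quasiconvex
function majorized by `f` on `Ω` (equivalently, the pointwise supremum of all
h-quasiconvex minorants of `f`). -/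
def IsHQCEnvelopeOn (Ω : Set Heis) (f Qf : Heis → ℝ) : Prop :=
  IsHQuasiconvexOn Ω Qf ∧ (∀ p ∈ Ω, Qf p ≤ f p) ∧
    ∀ g : Heis → ℝ, IsHQuasiconvexOn Ω g → (∀ p ∈ Ω, g p ≤ f p) → ∀ p ∈ Ω, g p ≤ Qf p

/-- The Korányi gauge. -/
def kGauge (p : Heis) : ℝ := ((p.1 ^ 2 + p.2.1 ^ 2) ^ 2 + 16 * p.2.2 ^ 2) ^ ((1 : ℝ) / 4)

/-- The left-invariant gauge metric `d_H(p,q) = |p⁻¹ · q|_G`. -/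
def dLeft (p q : Heis) : ℝ := kGauge (hmul (hinv p) q)

/-- The right-invariant gauge metric `d̃_H(p,q) = |p · q⁻¹|_G`. -/
def dRight (p q : Heis) : ℝ := kGauge (hmul p (hinv q))

/-- The gauge ball `B_r(p) = {q : |p⁻¹ · q|_G < r}`. -/
def gball (p : Heis) (r : ℝ) : Set Heis := {q | dLeft p q < r}

/-- The horizontal gradient `∇_H φ(p) = (X₁ φ(p), X₂ φ(p))`, where
`X₁ = ∂_x − (y/2) ∂_z` and `X₂ = ∂_y + (x/2) ∂_z`. -/
def hGrad (φ : Heis → ℝ) (p : Heis) : ℝ × ℝ :=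
  (fderiv ℝ φ p ((1, 0, -p.2.1 / 2) : Heis), fderiv ℝ φ p ((0, 1, p.1 / 2) : Heis))

/-- The pairing `⟨∇_H φ(p), (p⁻¹ · ξ)_h⟩`. -/
def hpair (φ : Heis → ℝ) (p ξ : Heis) : ℝ :=
  (hGrad φ p).1 * (hmul (hinv p) ξ).1 + (hGrad φ p).2 * (hmul (hinv p) ξ).2.1

/-- Local boundedness of `u` on `A`. -/
def LocBddOn (A : Set Heis) (u : Heis → ℝ) : Prop :=
  ∀ p ∈ A, ∃ s ∈ nhds p, ∃ C : ℝ, ∀ q ∈ s ∩ A, |u q| ≤ C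

/-- `u` is a viscosity subsolution of `u + H(p, u, ∇_H u) = f` in `Ω`, where
`H(p, u, ∇_H u) = sup {⟨∇_H u(p), (p⁻¹·ξ)_h⟩ : ξ ∈ ℍ_p ∩ Ω, u(ξ) < u(p)}`
(with the supremum understood to be `0` when `∇_H φ(p) = 0`). -/
def IsSubSoln (Ω : Set Heis) (f u : Heis → ℝ) : Prop :=
  UpperSemicontinuousOn u Ω ∧ LocBddOn Ω u ∧
    ∀ p ∈ Ω, ∀ φ : Heis → ℝ, ContDiff ℝ 1 φ →
      IsMaxOn (fun q => u q - φ q) Ω p →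
        (∀ ξ ∈ hplane p, ξ ∈ Ω → u ξ < u p → u p + hpair φ p ξ ≤ f p) ∧
        (hGrad φ p = 0 → u p ≤ f p)

/-- `u` is a viscosity supersolution of `u + H(p, u, ∇_H u) = f` in `Ω`, where for
supersolutions `H(p, u, ∇_H u) = sup {⟨∇_H u(p), (p⁻¹·ξ)_h⟩ : ξ ∈ ℍ_p ∩ Ω, u(ξ) ≤ u(p)}`.
(The set `Ŝ_p(u)` always contains `p` itself, so the inequality
`u(p) + sup ≥ f(p)` is expressed in ε-form.) -/
def IsSuperSoln (Ω : Set Heis) (f u : Heis → ℝ) : Prop :=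
  LowerSemicontinuousOn u Ω ∧ LocBddOn Ω u ∧
    ∀ p ∈ Ω, ∀ φ : Heis → ℝ, ContDiff ℝ 1 φ →
      IsMinOn (fun q => u q - φ q) Ω p →
        ∀ ε > 0, ∃ ξ ∈ hplane p, ξ ∈ Ω ∧ u ξ ≤ u p ∧ f p - ε ≤ u p + hpair φ p ξ

/-- `w` is the upper semicontinuous envelope of `v` on `A`: the smallest
upper semicontinuous function on `A` that majorizes `v`. -/
def IsUscEnvOn (A : Set Heis) (v w : Heis → ℝ) : Prop :=
  UpperSemicontinuousOn w A ∧ (∀ q ∈ A, v q ≤ w q) ∧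
    ∀ z : Heis → ℝ, UpperSemicontinuousOn z A → (∀ q ∈ A, v q ≤ z q) → ∀ q ∈ A, w q ≤ z q

/-- `w` is the lower semicontinuous envelope of `v` on `A`: the largest
lower semicontinuous function on `A` minorized by `v`. -/
def IsLscEnvOn (A : Set Heis) (v w : Heis → ℝ) : Prop :=
  LowerSemicontinuousOn w A ∧ (∀ q ∈ A, w q ≤ v q) ∧
    ∀ z : Heis → ℝ, LowerSemicontinuousOn z A → (∀ q ∈ A, z q ≤ v q) → ∀ q ∈ A, z q ≤ w q

/-- The h-convex hull of `E`: the intersection of all h-convex sets containing `E`. -/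
def hconvexHull (E : Set Heis) : Set Heis := ⋂₀ {D : Set Heis | IsHConvex D ∧ E ⊆ D}

/-- The direct convexification operator
`T[f](w) = inf {max (f p) (f q) : w ∈ [p,q], p ∈ Ω, q ∈ Ω ∩ ℍ_p}`. -/
def Tconv (Ω : Set Heis) (f : Heis → ℝ) : Heis → ℝ := fun w =>
  sInf {y | ∃ p ∈ Ω, ∃ q ∈ hplane p, q ∈ Ω ∧ w ∈ hseg p q ∧ y = max (f p) (f q)}


section BarrierHelpers

open Set

lemma heis_ext {a b : Heis} (h1 : a.1 = b.1) (h2 : a.2.1 = b.2.1) (h3 : a.2.2 = b.2.2) : a = b := by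
  obtain ⟨x, y, z⟩ := a; obtain ⟨x', y', z'⟩ := b
  simp_all

lemma hmul_assoc (a b c : Heis) : hmul (hmul a b) c = hmul a (hmul b c) := by
  refine heis_ext ?_ ?_ ?_ <;> simp [hmul] <;> ring

lemma hmul_cancel (v w : Heis) : hmul (hmul v (hinv w)) w = v := by
  refine heis_ext ?_ ?_ ?_ <;> simp [hmul, hinv] <;> ring

lemma hmul_cancel' (h p : Heis) : hmul (hmul h p) (hinv p) = h := by
  refine heis_ext ?_ ?_ ?_ <;> simp [hmul, hinv] <;> ring

lemma hmul_affine (h p q : Heis) (l : ℝ) :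
    hmul h ((1 - l) • p + l • q) = (1 - l) • hmul h p + l • hmul h q := by
  refine heis_ext ?_ ?_ ?_ <;>
    simp [hmul, Prod.smul_def, Prod.fst_add, Prod.snd_add, smul_eq_mul] <;> ring

lemma heis_norm_le {a : Heis} {M : ℝ} (h1 : |a.1| ≤ M) (h2 : |a.2.1| ≤ M) (h3 : |a.2.2| ≤ M) :
    ‖a‖ ≤ M := by
  rw [Prod.norm_def, Prod.norm_def]
  simp only [Real.norm_eq_abs]
  exact max_le h1 (max_le h2 h3)

lemma heis_abs1 (a : Heis) : |a.1| ≤ ‖a‖ := by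
  rw [← Real.norm_eq_abs]; exact norm_fst_le a

lemma heis_abs2 (a : Heis) : |a.2.1| ≤ ‖a‖ := by
  rw [← Real.norm_eq_abs]; exact (norm_fst_le a.2).trans (norm_snd_le a)

lemma heis_abs3 (a : Heis) : |a.2.2| ≤ ‖a‖ := by
  rw [← Real.norm_eq_abs]; exact (norm_snd_le a.2).trans (norm_snd_le a)

lemma hA_eq (p v : Heis) : hmul v (hinv p) =
    (v.1 - p.1, v.2.1 - p.2.1,
      (v.2.2 - p.2.2) + (p.1 * (v.2.1 - p.2.1) - (v.1 - p.1) * p.2.1) / 2) := by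
  refine heis_ext ?_ ?_ ?_ <;> simp [hmul, hinv] <;> ring

lemma hm_le (p v : Heis) : ‖hmul v (hinv p)‖ ≤ (1 + ‖p‖) * ‖v - p‖ := by
  rw [hA_eq]
  have hp1 := heis_abs1 p; have hp2 := heis_abs2 p
  have h1 := heis_abs1 (v - p); have h2 := heis_abs2 (v - p); have h3 := heis_abs3 (v - p)
  simp only [Prod.fst_sub, Prod.snd_sub] at h1 h2 h3
  have hn : (0:ℝ) ≤ ‖v - p‖ := norm_nonneg _
  have hpn : (0:ℝ) ≤ ‖p‖ := norm_nonneg _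
  refine heis_norm_le ?_ ?_ ?_
  · simp only
    nlinarith [abs_nonneg (v.1 - p.1)]
  · simp only
    nlinarith
  · simp only
    have := abs_add_le (v.2.2 - p.2.2) ((p.1 * (v.2.1 - p.2.1) - (v.1 - p.1) * p.2.1) / 2)
    have h4 : |(p.1 * (v.2.1 - p.2.1) - (v.1 - p.1) * p.2.1) / 2| ≤ ‖p‖ * ‖v - p‖ := by
      rw [abs_div]
      have := abs_sub (p.1 * (v.2.1 - p.2.1)) ((v.1 - p.1) * p.2.1)
      rw [abs_mul, abs_mul] at this
      have e1 : |p.1| * |v.2.1 - p.2.1| ≤ ‖p‖ * ‖v - p‖ := by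
        apply mul_le_mul hp1 h2 (abs_nonneg _) hpn
      have e2 : |v.1 - p.1| * |p.2.1| ≤ ‖v - p‖ * ‖p‖ := by
        apply mul_le_mul h1 hp2 (abs_nonneg _) hn
      simp only [abs_two]
      nlinarith
    nlinarith

/-- distance-to-complement-type function built from the right-invariant quantity. -/
def DD (S : Set Heis) (p : Heis) : ℝ := sInf ((fun v => ‖hmul v (hinv p)‖) '' S)

lemma DD_bdd (S : Set Heis) (p : Heis) : BddBelow ((fun v => ‖hmul v (hinv p)‖) '' S) :=
  ⟨0, by rintro y ⟨v, _, rfl⟩; exact norm_nonneg _⟩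

lemma DD_nonneg {S : Set Heis} (hS : S.Nonempty) (p : Heis) : 0 ≤ DD S p :=
  le_csInf (hS.image _) (by rintro y ⟨v, _, rfl⟩; exact norm_nonneg _)

lemma DD_le (S : Set Heis) {v : Heis} (hv : v ∈ S) (p : Heis) :
    DD S p ≤ ‖hmul v (hinv p)‖ :=
  csInf_le (DD_bdd S p) (mem_image_of_mem _ hv)

lemma DD_lip {S : Set Heis} (hS : S.Nonempty) {R : ℝ} (hR : 0 ≤ R)
    (hSR : ∀ v ∈ S, ‖v‖ ≤ R) (p p' : Heis) :
    DD S p ≤ DD S p' + (1 + R) * ‖p - p'‖ := by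
  have key : ∀ v ∈ S, ‖hmul v (hinv p)‖ ≤ ‖hmul v (hinv p')‖ + (1 + R) * ‖p - p'‖ := by
    intro v hv
    have hd : ‖hmul v (hinv p)‖ - ‖hmul v (hinv p')‖ ≤ ‖hmul v (hinv p) - hmul v (hinv p')‖ :=
      norm_sub_norm_le _ _
    have hP1 := heis_abs1 (p - p'); have hP2 := heis_abs2 (p - p'); have hP3 := heis_abs3 (p - p')
    simp only [Prod.fst_sub, Prod.snd_sub] at hP1 hP2 hP3
    have hv1 : |v.1| ≤ R := (heis_abs1 v).trans (hSR v hv)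
    have hv2 : |v.2.1| ≤ R := (heis_abs2 v).trans (hSR v hv)
    have hnn : (0:ℝ) ≤ ‖p - p'‖ := norm_nonneg _
    have hbound : ‖hmul v (hinv p) - hmul v (hinv p')‖ ≤ (1 + R) * ‖p - p'‖ := by
      rw [hA_eq, hA_eq]
      refine heis_norm_le ?_ ?_ ?_
      · simp only [Prod.fst_sub]
        have : v.1 - p.1 - (v.1 - p'.1) = -(p.1 - p'.1) := by ring
        rw [this, abs_neg]; nlinarith
      · simp only [Prod.snd_sub, Prod.fst_sub]
        have : v.2.1 - p.2.1 - (v.2.1 - p'.2.1) = -(p.2.1 - p'.2.1) := by ring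
        rw [this, abs_neg]; nlinarith
      · simp only [Prod.snd_sub]
        have he : (v.2.2 - p.2.2) + (p.1 * (v.2.1 - p.2.1) - (v.1 - p.1) * p.2.1) / 2
            - ((v.2.2 - p'.2.2) + (p'.1 * (v.2.1 - p'.2.1) - (v.1 - p'.1) * p'.2.1) / 2)
            = -(p.2.2 - p'.2.2) + ((p.1 - p'.1) * v.2.1 - v.1 * (p.2.1 - p'.2.1)) / 2 := by ring
        rw [he]
        refine le_trans (abs_add_le _ _) ?_
        rw [abs_neg, abs_div]
        have hnum : |(p.1 - p'.1) * v.2.1 - v.1 * (p.2.1 - p'.2.1)|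
            ≤ |p.1 - p'.1| * |v.2.1| + |v.1| * |p.2.1 - p'.2.1| := by
          refine le_trans (abs_sub _ _) ?_
          rw [abs_mul, abs_mul]
        have e1 : |p.1 - p'.1| * |v.2.1| ≤ ‖p - p'‖ * R :=
          mul_le_mul hP1 hv2 (abs_nonneg _) hnn
        have e2 : |v.1| * |p.2.1 - p'.2.1| ≤ R * ‖p - p'‖ :=
          mul_le_mul hv1 hP2 (abs_nonneg _) hR
        simp only [abs_two]
        nlinarith
    linarith
  refine le_trans ?_ (add_le_add (le_refl (DD S p')) (le_refl _))
  have : DD S p - (1 + R) * ‖p - p'‖ ≤ DD S p' := by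
    refine le_csInf (hS.image _) ?_
    rintro y ⟨v, hv, rfl⟩
    have := key v hv
    have h2 := DD_le S hv p
    linarith
  linarith

lemma DD_cont {S : Set Heis} (hS : S.Nonempty) {R : ℝ} (hR : 0 ≤ R)
    (hSR : ∀ v ∈ S, ‖v‖ ≤ R) : Continuous (DD S) := by
  have : LipschitzWith (1 + R).toNNReal (DD S) := by
    apply LipschitzWith.of_dist_le_mul
    intro p p'
    rw [Real.dist_eq, dist_eq_norm]
    rw [abs_sub_le_iff]
    have h1 := DD_lip hS hR hSR p p'
    have h2 := DD_lip hS hR hSR p' p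
    rw [norm_sub_rev p' p] at h2
    have : ((1 + R).toNNReal : ℝ) = 1 + R := Real.coe_toNNReal _ (by linarith)
    rw [this]
    constructor <;> linarith
  exact this.continuous

lemma DD_zero_frontier {Ω : Set Heis} {R₀ R : ℝ} (hΩR₀ : Ω ⊆ Metric.closedBall 0 R₀)
    (hR : R₀ + 1 ≤ R) (hS : {v | v ∉ Ω ∧ ‖v‖ ≤ R}.Nonempty) {p : Heis} (hp : p ∈ frontier Ω) :
    DD {v | v ∉ Ω ∧ ‖v‖ ≤ R} p = 0 := by
  set S := {v | v ∉ Ω ∧ ‖v‖ ≤ R}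
  have hpcl : p ∈ closure Ω := frontier_subset_closure hp
  have hpR₀ : ‖p‖ ≤ R₀ := by
    have := (closure_minimal hΩR₀ Metric.isClosed_closedBall) hpcl
    simpa using this
  have hpc : p ∈ closure Ωᶜ := by
    rw [frontier_eq_closure_inter_closure] at hp; exact hp.2
  have hle : ∀ ε > 0, DD S p ≤ ε := by
    intro ε hε
    have hpn : (0:ℝ) < 1 + ‖p‖ := by positivity
    have hε' : 0 < min 1 (ε / (1 + ‖p‖)) := lt_min one_pos (by positivity)
    obtain ⟨v, hvc, hvd⟩ := Metric.mem_closure_iff.mp hpc _ hε'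
    have hvp : ‖v - p‖ < min 1 (ε / (1 + ‖p‖)) := by
      rw [← norm_sub_rev p v, ← dist_eq_norm]; exact hvd
    have hvS : v ∈ S := by
      refine ⟨hvc, ?_⟩
      have : ‖v‖ ≤ ‖p‖ + ‖v - p‖ := by
        have := norm_add_le (v - p) p; simpa [sub_add_cancel, add_comm] using this
      have h1 : ‖v - p‖ ≤ 1 := le_of_lt (lt_of_lt_of_le hvp (min_le_left _ _))
      linarith
    calc DD S p ≤ ‖hmul v (hinv p)‖ := DD_le S hvS p
      _ ≤ (1 + ‖p‖) * ‖v - p‖ := hm_le p v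
      _ ≤ (1 + ‖p‖) * (ε / (1 + ‖p‖)) := by
          apply mul_le_mul_of_nonneg_left (le_of_lt (lt_of_lt_of_le hvp (min_le_right _ _)))
          linarith
      _ = ε := by field_simp
  have h0 : 0 ≤ DD {v | v ∉ Ω ∧ ‖v‖ ≤ R} p := DD_nonneg hS p
  by_contra hne
  have hgt : 0 < DD {v | v ∉ Ω ∧ ‖v‖ ≤ R} p := lt_of_le_of_ne h0 (Ne.symm hne)
  linarith [hle (DD {v | v ∉ Ω ∧ ‖v‖ ≤ R} p / 2) (by linarith)]

lemma frontier_of_DD_zero {Ω : Set Heis} {R : ℝ}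
    (hS : {v | v ∉ Ω ∧ ‖v‖ ≤ R}.Nonempty) {p : Heis} (hp : p ∈ closure Ω)
    (hd : DD {v | v ∉ Ω ∧ ‖v‖ ≤ R} p = 0) : p ∈ frontier Ω := by
  set S := {v | v ∉ Ω ∧ ‖v‖ ≤ R} with hSdef
  rw [frontier_eq_closure_inter_closure]
  refine ⟨hp, ?_⟩
  rw [Metric.mem_closure_iff]
  intro ε hε
  have hpn : (0:ℝ) < 1 + ‖p‖ := by positivity
  have hε' : (0:ℝ) < ε / (2 * (1 + ‖p‖)) := by positivity
  have hlt : DD S p < ε / (2 * (1 + ‖p‖)) := by rw [hd]; exact hε'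
  obtain ⟨y, ⟨v, hvS, rfl⟩, hy⟩ := exists_lt_of_csInf_lt (hS.image _) hlt
  refine ⟨v, hvS.1, ?_⟩
  have hnp1 := heis_abs1 p; have hnp2 := heis_abs2 p
  have hA := hA_eq p v
  set m := ‖hmul v (hinv p)‖ with hm
  have hm0 : 0 ≤ m := norm_nonneg _
  have hp0 : (0:ℝ) ≤ ‖p‖ := norm_nonneg _
  have h1 : |v.1 - p.1| ≤ m := by rw [hm, hA]; exact heis_abs1 (v.1 - p.1, v.2.1 - p.2.1, v.2.2 - p.2.2 + (p.1 * (v.2.1 - p.2.1) - (v.1 - p.1) * p.2.1) / 2)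
  have h2 : |v.2.1 - p.2.1| ≤ m := by rw [hm, hA]; exact heis_abs2 (v.1 - p.1, v.2.1 - p.2.1, v.2.2 - p.2.2 + (p.1 * (v.2.1 - p.2.1) - (v.1 - p.1) * p.2.1) / 2)
  have h3 : |(v.2.2 - p.2.2) + (p.1 * (v.2.1 - p.2.1) - (v.1 - p.1) * p.2.1) / 2| ≤ m := by
    rw [hm, hA]; exact heis_abs3 (v.1 - p.1, v.2.1 - p.2.1, v.2.2 - p.2.2 + (p.1 * (v.2.1 - p.2.1) - (v.1 - p.1) * p.2.1) / 2)
  have h3' : |v.2.2 - p.2.2| ≤ m * (1 + ‖p‖) := by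
    have e : v.2.2 - p.2.2 = ((v.2.2 - p.2.2) + (p.1 * (v.2.1 - p.2.1) - (v.1 - p.1) * p.2.1) / 2)
        - (p.1 * (v.2.1 - p.2.1) - (v.1 - p.1) * p.2.1) / 2 := by ring
    rw [e]
    refine le_trans (abs_sub _ _) ?_
    have hq : |(p.1 * (v.2.1 - p.2.1) - (v.1 - p.1) * p.2.1) / 2| ≤ m * ‖p‖ := by
      rw [abs_div, abs_two]
      have := abs_sub (p.1 * (v.2.1 - p.2.1)) ((v.1 - p.1) * p.2.1)
      rw [abs_mul, abs_mul] at this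
      have e1 : |p.1| * |v.2.1 - p.2.1| ≤ ‖p‖ * m :=
        mul_le_mul hnp1 h2 (abs_nonneg _) (norm_nonneg _)
      have e2 : |v.1 - p.1| * |p.2.1| ≤ m * ‖p‖ :=
        mul_le_mul h1 hnp2 (abs_nonneg _) hm0
      nlinarith
    nlinarith
  have hd2 : ‖p - v‖ ≤ m * (1 + ‖p‖) := by
    refine heis_norm_le ?_ ?_ ?_
    · simp only [Prod.fst_sub]
      rw [abs_sub_comm]
      nlinarith
    · simp only [Prod.snd_sub, Prod.fst_sub]
      rw [abs_sub_comm]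
      nlinarith
    · simp only [Prod.snd_sub]
      rw [abs_sub_comm]
      exact h3'
  rw [dist_eq_norm]
  have hmono : m * (1 + ‖p‖) < (ε / (2 * (1 + ‖p‖))) * (1 + ‖p‖) := by
    apply mul_lt_mul_of_pos_right hy hpn
  have he : (ε / (2 * (1 + ‖p‖))) * (1 + ‖p‖) = ε / 2 := by field_simp
  calc ‖p - v‖ ≤ m * (1 + ‖p‖) := hd2
    _ < ε / 2 := by rw [← he]; exact hmono
    _ < ε := by linarith

lemma DD_min_le {Ω : Set Heis} (hΩhc : IsHConvex Ω) {R₀ C₀ R : ℝ}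
    (hΩR₀ : Ω ⊆ Metric.closedBall 0 R₀) (hR₀ : 0 ≤ R₀) (hC₀0 : 0 ≤ C₀)
    (hS : {v | v ∉ Ω ∧ ‖v‖ ≤ R}.Nonempty)
    (hC₀ : ∀ x ∈ Ω, DD {v | v ∉ Ω ∧ ‖v‖ ≤ R} x ≤ C₀)
    (hR : C₀ + R₀ + C₀ * R₀ ≤ R)
    {p q w : Heis} (hp : p ∈ Ω) (hq : q ∈ hplane p) (hqΩ : q ∈ Ω) (hw : w ∈ hseg p q) :
    min (DD {v | v ∉ Ω ∧ ‖v‖ ≤ R} p) (DD {v | v ∉ Ω ∧ ‖v‖ ≤ R} q)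
      ≤ DD {v | v ∉ Ω ∧ ‖v‖ ≤ R} w := by
  set S := {v | v ∉ Ω ∧ ‖v‖ ≤ R} with hSdef
  refine le_csInf (hS.image _) ?_
  rintro y ⟨v, hvS, rfl⟩
  by_contra hlt
  push_neg at hlt
  set h := hmul v (hinv w) with hh
  have hnh : ‖h‖ < min (DD S p) (DD S q) := hlt
  have hnhp : ‖h‖ < DD S p := lt_of_lt_of_le hnh (min_le_left _ _)
  have hnhq : ‖h‖ < DD S q := lt_of_lt_of_le hnh (min_le_right _ _)
  have hhC₀ : ‖h‖ ≤ C₀ := le_of_lt (lt_of_lt_of_le hnhp (hC₀ p hp))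
  have h1 : |h.1| ≤ C₀ := (heis_abs1 h).trans hhC₀
  have h2 : |h.2.1| ≤ C₀ := (heis_abs2 h).trans hhC₀
  have h3 : |h.2.2| ≤ C₀ := (heis_abs3 h).trans hhC₀
  have hball : ∀ x : Heis, x ∈ Ω → ‖hmul h x‖ ≤ R := by
    intro x hx
    have hxR : ‖x‖ ≤ R₀ := by simpa using hΩR₀ hx
    have hx1 : |x.1| ≤ R₀ := (heis_abs1 x).trans hxR
    have hx2 : |x.2.1| ≤ R₀ := (heis_abs2 x).trans hxR
    have hx3 : |x.2.2| ≤ R₀ := (heis_abs3 x).trans hxR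
    refine le_trans (heis_norm_le (M := C₀ + R₀ + C₀ * R₀) ?_ ?_ ?_) hR
    · simp only [hmul]
      refine le_trans (abs_add_le _ _) ?_
      nlinarith [abs_nonneg h.1, abs_nonneg x.1]
    · simp only [hmul]
      refine le_trans (abs_add_le _ _) ?_
      nlinarith
    · simp only [hmul]
      refine le_trans (abs_add_le _ _) ?_
      have e1 : |(h.1 * x.2.1 - x.1 * h.2.1) / 2| ≤ C₀ * R₀ := by
        rw [abs_div, abs_two]
        have := abs_sub (h.1 * x.2.1) (x.1 * h.2.1)
        rw [abs_mul, abs_mul] at this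
        nlinarith [mul_le_mul h1 hx2 (abs_nonneg _) hC₀0, mul_le_mul hx1 h2 (abs_nonneg _) hR₀]
      have e2 : |h.2.2 + x.2.2| ≤ C₀ + R₀ := le_trans (abs_add_le _ _) (by linarith)
      linarith
  have hmem : ∀ x : Heis, x ∈ Ω → ‖h‖ < DD S x → hmul h x ∈ Ω := by
    intro x hx hDx
    by_contra hout
    have hSx : hmul h x ∈ S := ⟨hout, hball x hx⟩
    have := DD_le S hSx x
    rw [hmul_cancel'] at this
    linarith
  have hpΩ' : hmul h p ∈ Ω := hmem p hp hnhp
  have hqΩ' : hmul h q ∈ Ω := hmem q hqΩ hnhq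
  obtain ⟨h₀, hh₀, hqe⟩ := hq
  have hplane' : hmul h q ∈ hplane (hmul h p) := by
    refine ⟨h₀, hh₀, ?_⟩
    rw [hqe, ← hmul_assoc]
  obtain ⟨l, hl0, hl1, hwe⟩ := hw
  have hseg' : hmul h w ∈ hseg (hmul h p) (hmul h q) := by
    refine ⟨l, hl0, hl1, ?_⟩
    rw [hwe, hmul_affine]
  have : hmul h w ∈ Ω := hΩhc _ hpΩ' _ hplane' hqΩ' _ hseg'
  rw [hh, hmul_cancel] at this
  exact hvS.1 this

end BarrierHelpers

/-- Proposition 4.1 (Existence of an h-quasiconvex barrier): if `Ω` is bounded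
and h-convex and `f ∈ C(Ω̄)` satisfies `f = K` on `∂Ω` and `f ≤ K` in `Ω̄`,
then there is an h-quasiconvex `f̲ ∈ C(Ω̄)` with `f̲ ≤ f` in `Ω̄` and
`f̲ = K` on `∂Ω`. -/
theorem hquasiconvex_barrier
    (Ω : Set Heis) (hΩb : Bornology.IsBounded Ω) (hΩhc : IsHConvex Ω)
    (f : Heis → ℝ) (K : ℝ) (hf : ContinuousOn f (closure Ω))
    (hfK : ∀ p ∈ frontier Ω, f p = K) (hfle : ∀ p ∈ closure Ω, f p ≤ K) :
    ∃ fbar : Heis → ℝ, ContinuousOn fbar (closure Ω) ∧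
      IsHQuasiconvexOn Ω fbar ∧
      (∀ p ∈ closure Ω, fbar p ≤ f p) ∧
      (∀ p ∈ frontier Ω, fbar p = K) := by
  classical
  open Set in
  -- Step 1: produce the gauge-type distance to the complement with all needed properties.
  obtain ⟨D, hDnn, hDcont, hfrontD, hDfront, hmin⟩ :
      ∃ D : Heis → ℝ, (∀ p, 0 ≤ D p) ∧ Continuous D ∧
        (∀ p ∈ frontier Ω, D p = 0) ∧
        (∀ p ∈ closure Ω, D p = 0 → p ∈ frontier Ω) ∧
        (∀ p ∈ Ω, ∀ q ∈ hplane p, q ∈ Ω → ∀ w ∈ hseg p q, min (D p) (D q) ≤ D w) := by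
    obtain ⟨R₀', hR₀'⟩ := hΩb.subset_closedBall 0
    have hΩR₀ : Ω ⊆ Metric.closedBall 0 (max R₀' 0) :=
      hR₀'.trans (Metric.closedBall_subset_closedBall (le_max_left _ _))
    set R₀ := max R₀' 0 with hR₀def
    have hR₀0 : 0 ≤ R₀ := le_max_right _ _
    set C₀ := (1 + R₀) * (2 * R₀ + 2) with hC₀def
    have hC₀0 : (0:ℝ) ≤ C₀ := by positivity
    set R := C₀ + R₀ + C₀ * R₀ + 2 with hRdef
    have hR0 : (0:ℝ) ≤ R := by positivity
    have hR02 : R₀ + 2 ≤ R := by nlinarith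
    set v₀ : Heis := (R₀ + 2, 0, 0) with hv₀def
    have hv₀n : ‖v₀‖ ≤ R₀ + 2 := by
      refine heis_norm_le ?_ ?_ ?_
      · show |R₀ + 2| ≤ R₀ + 2
        rw [abs_of_nonneg (by linarith)]
      · show |(0:ℝ)| ≤ R₀ + 2
        rw [abs_zero]; linarith
      · show |(0:ℝ)| ≤ R₀ + 2
        rw [abs_zero]; linarith
    have hv₀Ω : v₀ ∉ Ω := by
      intro h
      have h2 : ‖v₀‖ ≤ R₀ := by simpa using hΩR₀ h
      have h3 : |v₀.1| ≤ ‖v₀‖ := heis_abs1 v₀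
      have h4 : v₀.1 = R₀ + 2 := rfl
      rw [h4] at h3
      rw [abs_of_nonneg (by linarith)] at h3
      linarith
    have hS : {v : Heis | v ∉ Ω ∧ ‖v‖ ≤ R}.Nonempty := ⟨v₀, hv₀Ω, le_trans hv₀n hR02⟩
    have hSR : ∀ v ∈ {v : Heis | v ∉ Ω ∧ ‖v‖ ≤ R}, ‖v‖ ≤ R := fun v hv => hv.2
    have hclball : closure Ω ⊆ Metric.closedBall 0 R₀ :=
      closure_minimal hΩR₀ Metric.isClosed_closedBall
    have hC₀cl : ∀ x ∈ closure Ω, DD {v : Heis | v ∉ Ω ∧ ‖v‖ ≤ R} x ≤ C₀ := by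
      intro x hx
      have hxn : ‖x‖ ≤ R₀ := by simpa using hclball hx
      have h1 : DD {v : Heis | v ∉ Ω ∧ ‖v‖ ≤ R} x ≤ ‖hmul v₀ (hinv x)‖ :=
        DD_le _ (⟨hv₀Ω, le_trans hv₀n hR02⟩ : v₀ ∈ {v : Heis | v ∉ Ω ∧ ‖v‖ ≤ R}) x
      have h2 : ‖hmul v₀ (hinv x)‖ ≤ (1 + ‖x‖) * ‖v₀ - x‖ := hm_le x v₀
      have h3 : ‖v₀ - x‖ ≤ ‖v₀‖ + ‖x‖ := norm_sub_le _ _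
      have h4 : (1 + ‖x‖) * ‖v₀ - x‖ ≤ (1 + R₀) * (2 * R₀ + 2) := by
        apply mul_le_mul (by linarith) (by linarith) (norm_nonneg _) (by linarith)
      calc DD {v : Heis | v ∉ Ω ∧ ‖v‖ ≤ R} x ≤ ‖hmul v₀ (hinv x)‖ := h1
        _ ≤ (1 + ‖x‖) * ‖v₀ - x‖ := h2
        _ ≤ (1 + R₀) * (2 * R₀ + 2) := h4
        _ = C₀ := by rw [hC₀def]
    refine ⟨DD {v : Heis | v ∉ Ω ∧ ‖v‖ ≤ R}, DD_nonneg hS, DD_cont hS hR0 hSR,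
      fun p hp => DD_zero_frontier hΩR₀ (by nlinarith) hS hp,
      fun p hp hd => frontier_of_DD_zero hS hp hd, ?_⟩
    intro p hp q hq hqΩ w hw
    exact DD_min_le hΩhc hΩR₀ hR₀0 hC₀0 hS
      (fun x hx => hC₀cl x (subset_closure hx)) (by linarith) hp hq hqΩ hw
  -- Step 2: trivial case where D vanishes identically on the closure.
  by_cases hpos : ∃ q₀ ∈ closure Ω, 0 < D q₀
  case neg =>
    push_neg at hpos
    have hDzero : ∀ p ∈ closure Ω, D p = 0 := fun p hp => le_antisymm (hpos p hp) (hDnn p)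
    refine ⟨fun _ => K, continuousOn_const, ?_, ?_, fun p hp => rfl⟩
    · intro p hp q hq hqΩ w hw; simp
    · intro p hp
      exact le_of_eq (hfK p (hDfront p hp (hDzero p hp))).symm
  case pos =>
  obtain ⟨q₀, hq₀cl, hq₀D⟩ := hpos
  have hcompact : IsCompact (closure Ω) := hΩb.isCompact_closure
  obtain ⟨qm, hqm, hqmm⟩ := hcompact.exists_isMinOn ⟨q₀, hq₀cl⟩ hf
  have hmf : ∀ q ∈ closure Ω, f qm ≤ f q := fun q hq => (isMinOn_iff.mp hqmm) q hq
  set C := K - f qm with hCdef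
  clear_value C
  have hC0 : 0 ≤ C := by
    have := hfle qm hqm; rw [hCdef]; linarith
  set term : ℝ → Heis → ℝ := fun t q => f q + (K - f q) * max 0 (1 - t / D q) with htermdef
  clear_value term
  set Θ : ℝ → ℝ :=
    fun t => sInf {y | ∃ q, (q ∈ closure Ω ∧ 0 < D q) ∧ y = term t q} with hΘdef
  clear_value Θ
  have hTne : ∀ t : ℝ, {y | ∃ q, (q ∈ closure Ω ∧ 0 < D q) ∧ y = term t q}.Nonempty :=
    fun t => ⟨term t q₀, q₀, ⟨hq₀cl, hq₀D⟩, rfl⟩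
  have htermge : ∀ (t : ℝ) q, q ∈ closure Ω → f q ≤ term t q := by
    intro t q hq
    have h1 : 0 ≤ (K - f q) * max 0 (1 - t / D q) :=
      mul_nonneg (by linarith [hfle q hq]) (le_max_left _ _)
    simp only [htermdef]
    linarith
  have hTbdd : ∀ t : ℝ, BddBelow {y | ∃ q, (q ∈ closure Ω ∧ 0 < D q) ∧ y = term t q} := by
    intro t
    refine ⟨f qm, ?_⟩
    rintro y ⟨q, ⟨hq, hDq⟩, rfl⟩
    exact le_trans (hmf q hq) (htermge t q hq)
  have hΘle : ∀ (t : ℝ) q, q ∈ closure Ω → 0 < D q → Θ t ≤ term t q := by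
    intro t q hq hDq
    rw [hΘdef]
    exact csInf_le (hTbdd t) ⟨q, ⟨hq, hDq⟩, rfl⟩
  have hΘge : ∀ (t c : ℝ), (∀ q, q ∈ closure Ω → 0 < D q → c ≤ term t q) → c ≤ Θ t := by
    intro t c hc
    rw [hΘdef]
    refine le_csInf (hTne t) ?_
    rintro y ⟨q, ⟨hq, hDq⟩, rfl⟩
    exact hc q hq hDq
  have htermmono : ∀ t t' : ℝ, t ≤ t' → ∀ q, q ∈ closure Ω → 0 < D q →
      term t' q ≤ term t q := by
    intro t t' htt q hq hDq
    have hfq : 0 ≤ K - f q := by linarith [hfle q hq]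
    have hmx : max 0 (1 - t' / D q) ≤ max 0 (1 - t / D q) := by
      apply max_le_max le_rfl
      have : t / D q ≤ t' / D q := by gcongr
      linarith
    simp only [htermdef]
    nlinarith [mul_le_mul_of_nonneg_left hmx hfq]
  have hΘanti : ∀ t t' : ℝ, t ≤ t' → Θ t' ≤ Θ t := by
    intro t t' htt
    conv_rhs => rw [hΘdef]
    refine le_csInf (hTne t) ?_
    rintro y ⟨q, ⟨hq, hDq⟩, rfl⟩
    exact le_trans (hΘle t' q hq hDq) (htermmono t t' htt q hq hDq)
  have htermzero : ∀ q : Heis, term 0 q = K := by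
    intro q
    simp only [htermdef]
    rw [zero_div, sub_zero, max_eq_right (by norm_num : (0:ℝ) ≤ 1), mul_one]
    ring
  have hΘ0 : Θ 0 = K := by
    apply le_antisymm
    · rw [← htermzero q₀]; exact hΘle 0 q₀ hq₀cl hq₀D
    · apply hΘge; intro q hq hDq; rw [htermzero q]
  have hΘleK : ∀ t : ℝ, 0 ≤ t → Θ t ≤ K := fun t ht => hΘ0 ▸ hΘanti 0 t ht
  -- Step 3: near the boundary, f is close to K (compactness).
  have hsmall : ∀ ε > 0, ∃ δ > 0, ∀ q ∈ closure Ω, D q ≤ δ → K - f q ≤ ε := by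
    intro ε hε
    have hBclosed : IsClosed (closure Ω ∩ f ⁻¹' (Iic (K - ε))) :=
      hf.preimage_isClosed_of_isClosed isClosed_closure isClosed_Iic
    have hBcompact : IsCompact (closure Ω ∩ f ⁻¹' (Iic (K - ε))) :=
      hcompact.of_isClosed_subset hBclosed inter_subset_left
    rcases (closure Ω ∩ f ⁻¹' (Iic (K - ε))).eq_empty_or_nonempty with hBe | hBne
    · refine ⟨1, one_pos, ?_⟩
      intro q hq hDq
      by_contra hcon; push_neg at hcon
      have : q ∈ closure Ω ∩ f ⁻¹' (Iic (K - ε)) := ⟨hq, by simp; linarith⟩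
      rw [hBe] at this; exact this
    · obtain ⟨qs, hqs, hqsm⟩ := hBcompact.exists_isMinOn hBne hDcont.continuousOn
      have hqs0 : 0 < D qs := by
        rcases lt_or_eq_of_le (hDnn qs) with h | h
        · exact h
        · exfalso
          have hfr := hDfront qs hqs.1 h.symm
          have h1 := hfK qs hfr
          have h2 : f qs ≤ K - ε := hqs.2
          linarith
      refine ⟨D qs / 2, by linarith, ?_⟩
      intro q hq hDq
      by_contra hcon; push_neg at hcon
      have hqB : q ∈ closure Ω ∩ f ⁻¹' (Iic (K - ε)) := ⟨hq, by simp; linarith⟩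
      have := (isMinOn_iff.mp hqsm) q hqB
      linarith
  -- Step 4: Θ is Lipschitz away from 0.
  have hΘlip : ∀ a : ℝ, 0 < a → ∀ t t' : ℝ, a ≤ t → a ≤ t' →
      Θ t ≤ Θ t' + (C * |t - t'|) / a := by
    intro a ha t t' hat hat'
    have key : ∀ q, q ∈ closure Ω → 0 < D q →
        term t q ≤ term t' q + (C * |t - t'|) / a := by
      intro q hq hDq
      have hfq : 0 ≤ K - f q := by linarith [hfle q hq]
      have hfqC : K - f q ≤ C := by rw [hCdef]; linarith [hmf q hq]
      by_cases hqa : D q ≤ a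
      · have m1 : max 0 (1 - t / D q) = 0 := max_eq_left (by
          have : 1 ≤ t / D q := (one_le_div hDq).mpr (le_trans hqa hat)
          linarith)
        have m2 : max 0 (1 - t' / D q) = 0 := max_eq_left (by
          have : 1 ≤ t' / D q := (one_le_div hDq).mpr (le_trans hqa hat')
          linarith)
        simp only [htermdef, m1, m2, mul_zero, add_zero]
        have : 0 ≤ (C * |t - t'|) / a := div_nonneg (mul_nonneg hC0 (abs_nonneg _)) ha.le
        linarith
      · push_neg at hqa
        have hmd : max 0 (1 - t / D q) ≤ max 0 (1 - t' / D q) + |t - t'| / D q := by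
          have habs : |max 0 (1 - t / D q) - max 0 (1 - t' / D q)| ≤ |t - t'| / D q := by
            rw [max_comm 0 (1 - t / D q), max_comm 0 (1 - t' / D q)]
            refine le_trans (abs_max_sub_max_le_abs _ _ _) ?_
            have e : (1 - t / D q) - (1 - t' / D q) = (t' - t) / D q := by field_simp; ring
            rw [e, abs_div, abs_of_pos hDq, abs_sub_comm]
          linarith [(abs_le.mp habs).2]
        have hterm2 : term t q ≤ term t' q + (K - f q) * (|t - t'| / D q) := by
          simp only [htermdef]
          nlinarith [mul_le_mul_of_nonneg_left hmd hfq]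
        have hfinal : (K - f q) * (|t - t'| / D q) ≤ (C * |t - t'|) / a := by
          rw [mul_div_assoc']
          exact div_le_div₀ (mul_nonneg hC0 (abs_nonneg _))
            (mul_le_mul_of_nonneg_right hfqC (abs_nonneg _)) ha (le_of_lt hqa)
        linarith
    have hstep : Θ t - (C * |t - t'|) / a ≤ Θ t' := by
      conv_rhs => rw [hΘdef]
      refine le_csInf (hTne t') ?_
      rintro y ⟨q, ⟨hq, hDq⟩, rfl⟩
      have h1 := key q hq hDq
      have h2 := hΘle t q hq hDq
      exact sub_le_iff_le_add.mpr (le_trans h2 h1)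
    linarith
  -- Step 5: Θ is continuous on [0,∞).
  have hΘcont : ContinuousOn Θ (Ici 0) := by
    intro t₀ ht₀
    rw [Metric.continuousWithinAt_iff]
    intro ε hε
    rcases eq_or_lt_of_le (Set.mem_Ici.mp ht₀ : (0:ℝ) ≤ t₀) with h0 | hposT
    · -- t₀ = 0
      obtain ⟨δ₁, hδ₁, hδsm⟩ := hsmall (ε/2) (by linarith)
      refine ⟨min δ₁ (δ₁ * (ε/2) / (C+1)), by positivity, ?_⟩
      intro t ht hdist
      have ht0 : (0:ℝ) ≤ t := Set.mem_Ici.mp ht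
      have htδ : t < min δ₁ (δ₁ * (ε/2) / (C+1)) := by
        rw [Real.dist_eq, ← h0, sub_zero, abs_of_nonneg ht0] at hdist
        exact hdist
      have hup : Θ t ≤ K := hΘleK t ht0
      have hlow : K - ε/2 ≤ Θ t := by
        apply hΘge
        intro q hq hDq
        by_cases hqδ : D q ≤ δ₁
        · have := hδsm q hq hqδ
          linarith [htermge t q hq]
        · push_neg at hqδ
          have hfq : 0 ≤ K - f q := by linarith [hfle q hq]
          have hfqC : K - f q ≤ C := by rw [hCdef]; linarith [hmf q hq]
          have h1 : f q + (K - f q) * (1 - t / D q) ≤ term t q := by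
            simp only [htermdef]
            nlinarith [mul_le_mul_of_nonneg_left (le_max_right 0 (1 - t / D q)) hfq]
          have h2 : (K - f q) * (t / D q) ≤ C * (t / δ₁) := by
            rw [mul_div_assoc', mul_div_assoc']
            exact div_le_div₀ (mul_nonneg hC0 ht0)
              (mul_le_mul_of_nonneg_right hfqC ht0) hδ₁ (le_of_lt hqδ)
          have h3 : C * (t / δ₁) ≤ ε/2 := by
            have htle : t ≤ δ₁ * (ε/2) / (C+1) :=
              le_of_lt (lt_of_lt_of_le htδ (min_le_right _ _))
            have h4 : t * (C+1) ≤ δ₁ * (ε/2) :=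
              (le_div_iff₀ (by linarith : (0:ℝ) < C+1)).mp htle
            rw [mul_div_assoc', div_le_iff₀ hδ₁]
            nlinarith [h4, ht0, hC0]
          have e : f q + (K - f q) * (1 - t / D q) = K - (K - f q) * (t / D q) := by ring
          linarith
      rw [Real.dist_eq, ← h0, hΘ0]
      have : |Θ t - K| ≤ ε/2 := abs_le.mpr ⟨by linarith, by linarith⟩
      linarith
    · -- 0 < t₀
      have ha : 0 < t₀ / 2 := by linarith
      refine ⟨min (t₀/2) ((t₀/2) * ε / (C+1)), by positivity, ?_⟩
      intro t ht hdist
      have hdist' : |t - t₀| < min (t₀/2) ((t₀/2) * ε / (C+1)) := by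
        rwa [Real.dist_eq] at hdist
      have hta : t₀/2 ≤ t := by
        have h1 : |t - t₀| < t₀/2 := lt_of_lt_of_le hdist' (min_le_left _ _)
        have := abs_lt.mp h1
        linarith [this.1]
      have hta' : t₀/2 ≤ t₀ := by linarith
      have hl1 := hΘlip (t₀/2) ha t t₀ hta hta'
      have hl2 := hΘlip (t₀/2) ha t₀ t hta' hta
      rw [abs_sub_comm t₀ t] at hl2
      have hub : |Θ t - Θ t₀| ≤ (C * |t - t₀|) / (t₀/2) := by
        rw [abs_sub_le_iff]
        constructor <;> linarith
      have hsz : (C * |t - t₀|) / (t₀/2) < ε := by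
        have h2 : |t - t₀| ≤ (t₀/2) * ε / (C+1) :=
          le_of_lt (lt_of_lt_of_le hdist' (min_le_right _ _))
        rw [div_lt_iff₀ ha]
        have hβ : 0 < (t₀/2) * ε / (C+1) := by positivity
        have hcb : C * |t - t₀| ≤ C * ((t₀/2) * ε / (C+1)) :=
          mul_le_mul_of_nonneg_left h2 hC0
        have h5 : C * ((t₀/2) * ε / (C+1)) = (t₀/2) * ε - (t₀/2) * ε / (C+1) := by
          field_simp
          ring
        linarith
      rw [Real.dist_eq]
      exact lt_of_le_of_lt hub hsz
  -- Step 6: assemble.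
  refine ⟨fun p => Θ (D p), ?_, ?_, ?_, ?_⟩
  · exact hΘcont.comp hDcont.continuousOn (fun p _ => hDnn p)
  · intro p hp q hq hqΩ w hw
    show Θ (D w) ≤ max (Θ (D p)) (Θ (D q))
    have hm := hmin p hp q hq hqΩ w hw
    have h1 : Θ (D w) ≤ Θ (min (D p) (D q)) := hΘanti _ _ hm
    rcases le_total (D p) (D q) with h | h
    · rw [min_eq_left h] at h1; exact le_trans h1 (le_max_left _ _)
    · rw [min_eq_right h] at h1; exact le_trans h1 (le_max_right _ _)
  · intro p hp
    show Θ (D p) ≤ f p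
    rcases lt_or_eq_of_le (hDnn p) with hDp | hDp
    · have h1 : Θ (D p) ≤ term (D p) p := hΘle _ p hp hDp
      have h2 : term (D p) p = f p := by
        simp only [htermdef]
        rw [div_self (ne_of_gt hDp)]
        simp
      rw [h2] at h1; exact h1
    · have hfr := hDfront p hp hDp.symm
      rw [← hDp, hΘ0]
      exact le_of_eq (hfK p hfr).symm
  · intro p hp
    show Θ (D p) = K
    rw [hfrontD p hp, hΘ0]
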